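/- arXiv:2105.02074 — 3 statements merged into one kernel-verified Lean document; each statement's English description precedes it below -/
import Mathlib

section
/- Let {E_i}_{i=1}^n be a POVM on ℂ^d with n ≥ 2 and every effect E_i nonzero, and let S be the n×n real symmetric Gram matrix with entries S_{ij} = tr(√E_i √E_j). Then the vector of eigenvalues of S majorizes the vector (1, (d−1)/(n−1), …, (d−1)/(n−1)); explicitly, the eigenvalues of S sum to d and, for every k with 1 ≤ k ≤ n, the sum of the k largest eigenvalues of S is at least 1 + (k−1)(d−1)/(n−1). -/
open Matrix BigOperators
open scoped ComplexOrder

noncomputable def Matrix.PosSemidef.sqrt {n : Type*} [Fintype n] [DecidableEq n]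
    {𝕜 : Type*} [RCLike 𝕜] {A : Matrix n n 𝕜} (hA : A.PosSemidef) : Matrix n n 𝕜 :=
  hA.1.eigenvectorUnitary.1 * diagonal ((↑) ∘ (√·) ∘ hA.1.eigenvalues) *
    (star hA.1.eigenvectorUnitary : Matrix n n 𝕜)

private lemma my_posSemidef_sqrt {n : Type*} [Fintype n] [DecidableEq n]
    {𝕜 : Type*} [RCLike 𝕜] {A : Matrix n n 𝕜} (hA : A.PosSemidef) : hA.sqrt.PosSemidef := by
  unfold Matrix.PosSemidef.sqrt
  have hD : (diagonal (((↑) ∘ (√·) ∘ hA.1.eigenvalues) : n → 𝕜)).PosSemidef := by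
    rw [posSemidef_diagonal_iff]
    intro i
    simp [Real.sqrt_nonneg]
  have := hD.mul_mul_conjTranspose_same (hA.1.eigenvectorUnitary.1)
  simpa [Matrix.star_eq_conjTranspose] using this

private lemma my_sqrt_mul_self {n : Type*} [Fintype n] [DecidableEq n]
    {𝕜 : Type*} [RCLike 𝕜] {A : Matrix n n 𝕜} (hA : A.PosSemidef) : hA.sqrt * hA.sqrt = A := by
  unfold Matrix.PosSemidef.sqrt
  set U : Matrix n n 𝕜 := hA.1.eigenvectorUnitary.1 with hU
  have hUU : star U * U = 1 := Unitary.coe_star_mul_self _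
  have hDD : diagonal (((↑) ∘ (√·) ∘ hA.1.eigenvalues) : n → 𝕜) *
      diagonal (((↑) ∘ (√·) ∘ hA.1.eigenvalues) : n → 𝕜) = diagonal (RCLike.ofReal ∘ hA.1.eigenvalues) := by
    rw [diagonal_mul_diagonal]
    congr 1
    funext i
    simp only [Function.comp_apply]
    rw [← RCLike.ofReal_mul, Real.mul_self_sqrt (hA.eigenvalues_nonneg i)]
  calc U * diagonal (((↑) ∘ (√·) ∘ hA.1.eigenvalues) : n → 𝕜) * star U *
        (U * diagonal (((↑) ∘ (√·) ∘ hA.1.eigenvalues) : n → 𝕜) * star U)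
      = U * (diagonal (((↑) ∘ (√·) ∘ hA.1.eigenvalues) : n → 𝕜) * (star U * U) *
        diagonal (((↑) ∘ (√·) ∘ hA.1.eigenvalues) : n → 𝕜)) * star U := by
        simp only [Matrix.mul_assoc]
    _ = A := by
        rw [hUU, Matrix.mul_one, hDD]
        conv_rhs => rw [hA.1.spectral_theorem]
        rfl

section Helpers

variable {𝕜 : Type*} [RCLike 𝕜] {m : Type*} [Fintype m] [DecidableEq m]

private lemma my_trace_eq {A : Matrix m m 𝕜} (hA : A.IsHermitian) :
    A.trace = ∑ i, (hA.eigenvalues i : 𝕜) := by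
  have hUsU : (hA.eigenvectorUnitary : Matrix m m 𝕜) *
      star (hA.eigenvectorUnitary : Matrix m m 𝕜) = 1 :=
    Matrix.mem_unitaryGroup_iff.mp (hA.eigenvectorUnitary).2
  have hD : star (hA.eigenvectorUnitary : Matrix m m 𝕜) * A *
      (hA.eigenvectorUnitary : Matrix m m 𝕜)
      = Matrix.diagonal (RCLike.ofReal ∘ hA.eigenvalues) := by
    simpa using hA.conjStarAlgAut_star_eigenvectorUnitary
  have h2 : (Matrix.diagonal (RCLike.ofReal ∘ hA.eigenvalues)).trace = A.trace := by
    rw [← hD, Matrix.trace_mul_comm, ← Matrix.mul_assoc, hUsU, Matrix.one_mul]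
  rw [← h2, Matrix.trace_diagonal]
  simp

private lemma my_trace_sq_eq {A : Matrix m m 𝕜} (hA : A.IsHermitian) :
    (A * A).trace = ∑ i, (hA.eigenvalues i : 𝕜) ^ 2 := by
  have hUsU : (hA.eigenvectorUnitary : Matrix m m 𝕜) *
      star (hA.eigenvectorUnitary : Matrix m m 𝕜) = 1 :=
    Matrix.mem_unitaryGroup_iff.mp (hA.eigenvectorUnitary).2
  set U : Matrix m m 𝕜 := (hA.eigenvectorUnitary : Matrix m m 𝕜) with hU
  have hD : star U * A * U = Matrix.diagonal (RCLike.ofReal ∘ hA.eigenvalues) :=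
    by simpa using hA.conjStarAlgAut_star_eigenvectorUnitary
  have h1 : Matrix.diagonal (RCLike.ofReal ∘ hA.eigenvalues) *
      Matrix.diagonal (RCLike.ofReal ∘ hA.eigenvalues) = star U * (A * A) * U := by
    rw [← hD]
    calc (star U * A * U) * (star U * A * U)
        = star U * A * (U * star U) * (A * U) := by simp only [Matrix.mul_assoc]
      _ = star U * (A * A) * U := by rw [hUsU, Matrix.mul_one]; simp only [Matrix.mul_assoc]
  have h2 : (star U * (A * A) * U).trace = (A * A).trace := by
    rw [Matrix.trace_mul_comm, ← Matrix.mul_assoc, hUsU, Matrix.one_mul]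
  rw [← h2, ← h1, Matrix.diagonal_mul_diagonal, Matrix.trace_diagonal]
  simp [pow_two]

private lemma my_re_trace_eq {A : Matrix m m 𝕜} (hA : A.IsHermitian) :
    RCLike.re A.trace = ∑ i, hA.eigenvalues i := by
  rw [my_trace_eq hA, map_sum]
  simp

private lemma my_re_trace_sq_eq {A : Matrix m m 𝕜} (hA : A.IsHermitian) :
    RCLike.re ((A * A)).trace = ∑ i, (hA.eigenvalues i) ^ 2 := by
  rw [my_trace_sq_eq hA, map_sum]
  simp only [← RCLike.ofReal_pow, RCLike.ofReal_re]

end Helpers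

private lemma my_quad_form_le {N : ℕ} {S : Matrix (Fin N) (Fin N) ℝ} (hS : S.IsHermitian)
    (v : Fin N → ℝ) {mx : ℝ} (hmx : ∀ i, hS.eigenvalues i ≤ mx) :
    v ⬝ᵥ (S *ᵥ v) ≤ mx * (v ⬝ᵥ v) := by
  have hUsU : (hS.eigenvectorUnitary : Matrix (Fin N) (Fin N) ℝ) *
      star (hS.eigenvectorUnitary : Matrix (Fin N) (Fin N) ℝ) = 1 :=
    Matrix.mem_unitaryGroup_iff.mp (hS.eigenvectorUnitary).2
  set U : Matrix (Fin N) (Fin N) ℝ := (hS.eigenvectorUnitary : Matrix (Fin N) (Fin N) ℝ) with hU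
  set f := hS.eigenvalues with hf
  set w := v ᵥ* U with hw
  have hsw : star U *ᵥ v = w := by
    rw [hw, ← Matrix.mulVec_transpose]
    congr 1
  have hww : w ⬝ᵥ w = v ⬝ᵥ v := by
    nth_rewrite 1 [hw]
    rw [← Matrix.dotProduct_mulVec, ← hsw, Matrix.mulVec_mulVec, hUsU, Matrix.one_mulVec]
  have key : v ⬝ᵥ (S *ᵥ v) = ∑ i, f i * (w i)^2 := by
    nth_rewrite 1 [hS.spectral_theorem]
    rw [Unitary.conjStarAlgAut_apply, ← Matrix.mulVec_mulVec, ← Matrix.mulVec_mulVec, hsw, Matrix.dotProduct_mulVec, ← hw]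
    simp only [dotProduct, Matrix.mulVec_diagonal]
    refine Finset.sum_congr rfl fun i _ => ?_
    simp [RCLike.ofReal_real_eq_id]
    ring
  rw [key]
  calc ∑ i, f i * (w i)^2 ≤ ∑ i, mx * (w i)^2 := by
        refine Finset.sum_le_sum fun i _ => ?_
        have := sq_nonneg (w i)
        nlinarith [hmx i]
    _ = mx * (w ⬝ᵥ w) := by
        rw [← Finset.mul_sum]
        congr 1
        simp [dotProduct, pow_two]
    _ = mx * (v ⬝ᵥ v) := by rw [hww]

private lemma my_exists_good_subset {N : ℕ} (f : Fin N → ℝ) (i₀ : Fin N) (k : ℕ)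
    (hk1 : 1 ≤ k) (hkn : k ≤ N) :
    ∃ T : Finset (Fin N), T.card = k ∧ i₀ ∈ T ∧
      ∀ i ∈ T.erase i₀, ∀ j ∈ Tᶜ, f j ≤ f i := by
  classical
  obtain ⟨T₀, hT₀sub, -, hT₀card⟩ := Finset.exists_subsuperset_card_eq
    (Finset.subset_univ {i₀}) (by simpa using hk1) (by simpa using hkn)
  set 𝒮 : Finset (Finset (Fin N)) :=
    (Finset.univ.powersetCard k).filter (fun T => i₀ ∈ T) with h𝒮
  have hT₀ : T₀ ∈ 𝒮 := by
    simp only [h𝒮, Finset.mem_filter, Finset.mem_powersetCard_univ]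
    exact ⟨hT₀card, hT₀sub (Finset.mem_singleton_self i₀)⟩
  obtain ⟨T, hT𝒮, hTmax⟩ := Finset.exists_max_image 𝒮 (fun T => ∑ i ∈ T, f i) ⟨T₀, hT₀⟩
  simp only [h𝒮, Finset.mem_filter, Finset.mem_powersetCard_univ] at hT𝒮
  refine ⟨T, hT𝒮.1, hT𝒮.2, ?_⟩
  intro i hi j hj
  by_contra hcon
  push_neg at hcon
  have hiT : i ∈ T := Finset.mem_of_mem_erase hi
  have hii₀ : i ≠ i₀ := Finset.ne_of_mem_erase hi
  have hjT : j ∉ T := Finset.mem_compl.mp hj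
  have hj' : j ∉ T.erase i := fun h => hjT (Finset.mem_of_mem_erase h)
  set T' := insert j (T.erase i) with hT'
  have hT'card : T'.card = k := by
    rw [hT', Finset.card_insert_of_notMem hj', Finset.card_erase_of_mem hiT, hT𝒮.1]
    omega
  have hT'mem : T' ∈ 𝒮 := by
    simp only [h𝒮, Finset.mem_filter, Finset.mem_powersetCard_univ]
    exact ⟨hT'card, Finset.mem_insert_of_mem (Finset.mem_erase.mpr ⟨hii₀.symm, hT𝒮.2⟩)⟩
  have hsum' : ∑ x ∈ T', f x = ∑ x ∈ T, f x - f i + f j := by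
    rw [hT', Finset.sum_insert hj', Finset.sum_erase_eq_sub hiT]
    ring
  have := hTmax T' hT'mem
  simp only [hsum'] at this
  linarith

private lemma my_card_mul_sum_le {N : ℕ} (f : Fin N → ℝ) (s t : Finset (Fin N))
    (h : ∀ i ∈ s, ∀ j ∈ t, f j ≤ f i) :
    (s.card : ℝ) * ∑ j ∈ t, f j ≤ (t.card : ℝ) * ∑ i ∈ s, f i := by
  calc (s.card : ℝ) * ∑ j ∈ t, f j = ∑ _i ∈ s, ∑ j ∈ t, f j := by
        rw [Finset.sum_const, nsmul_eq_mul]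
    _ ≤ ∑ i ∈ s, ∑ _j ∈ t, f i := Finset.sum_le_sum fun i hi =>
        Finset.sum_le_sum fun j hj => h i hi j hj
    _ = (t.card : ℝ) * ∑ i ∈ s, f i := by
        simp [Finset.sum_const, nsmul_eq_mul, Finset.sum_mul, mul_comm]

/-- For a POVM `{E_i}` on `ℂ^d` with `n ≥ 2` and all effects nonzero, the
eigenvalues of the Gram matrix `S`, `S_{ij} = tr(√E_i √E_j)`, majorize
`(1, (d−1)/(n−1), …, (d−1)/(n−1))`: they sum to `d` and, for every `1 ≤ k ≤ n`, the sum of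
the `k` largest eigenvalues (equivalently, the largest sum over a `k`-element subset) is at
least `1 + (k−1)(d−1)/(n−1)`. -/
theorem gram_eigenvalues_majorize_ea
    (d n : ℕ) (hn : 2 ≤ n)
    (E : Fin n → Matrix (Fin d) (Fin d) ℂ)
    (hE : ∀ i, (E i).PosSemidef)
    (hsum : ∑ i, E i = 1)
    (hne : ∀ i, E i ≠ 0)
    (S : Matrix (Fin n) (Fin n) ℝ)
    (hSdef : S = Matrix.of fun i j => ((hE i).sqrt * (hE j).sqrt).trace.re)
    (hS : S.IsHermitian) :
    (∑ i, hS.eigenvalues i = (d : ℝ))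
    ∧ ∀ k : ℕ, 1 ≤ k → k ≤ n →
        ∃ T : Finset (Fin n), T.card = k ∧
          1 + ((k : ℝ) - 1) * ((d : ℝ) - 1) / ((n : ℝ) - 1) ≤ ∑ i ∈ T, hS.eigenvalues i := by
  classical
  have hd1 : 1 ≤ d := by
    by_contra hcon
    have hd0 : d = 0 := by omega
    subst hd0
    exact hne ⟨0, by omega⟩ (Subsingleton.elim _ _)
  set A : Fin n → Matrix (Fin d) (Fin d) ℂ := fun i => (hE i).sqrt with hAdef
  have hAps : ∀ i, (A i).PosSemidef := fun i => my_posSemidef_sqrt (hE i)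
  have hAA : ∀ i, A i * A i = E i := fun i => my_sqrt_mul_self (hE i)
  have hS' : ∀ i j, S i j = ((A i * A j).trace).re := by
    intro i j; rw [hSdef]; rfl
  have hEtr : ∑ i, ((E i).trace).re = (d : ℝ) := by
    have h1 : ∑ i, ((E i).trace) = (d : ℂ) := by
      rw [← Matrix.trace_sum, hsum, Matrix.trace_one]
      simp
    calc ∑ i, ((E i).trace).re = (∑ i, (E i).trace).re := (Complex.re_sum _ _).symm
      _ = (d:ℝ) := by rw [h1]; simp
  have part1 : ∑ i, hS.eigenvalues i = (d : ℝ) := by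
    have h2 : RCLike.re S.trace = ∑ i, hS.eigenvalues i := my_re_trace_eq hS
    have h3 : S.trace = (d:ℝ) := by
      calc S.trace = ∑ i, ((E i).trace).re := by
            refine Finset.sum_congr rfl fun i _ => ?_
            rw [Matrix.diag_apply, hS' i i, hAA]
        _ = (d:ℝ) := hEtr
    rw [← h2, h3]
    simp
  refine ⟨part1, ?_⟩
  set c : Fin n → ℝ := fun i => ((A i).trace).re with hc
  have hcEi : ∀ i, ((E i).trace).re ≤ (c i)^2 := by
    intro i
    have h1 : ((E i).trace).re = ∑ t, ((hAps i).1.eigenvalues t)^2 := by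
      rw [← hAA i, ← RCLike.re_to_complex]
      exact my_re_trace_sq_eq (hAps i).1
    have h2 : c i = ∑ t, (hAps i).1.eigenvalues t := by
      rw [hc]
      simp only [← RCLike.re_to_complex]
      exact my_re_trace_eq (hAps i).1
    rw [h1, h2]
    exact Finset.sum_sq_le_sq_sum_of_nonneg fun t _ => (hAps i).eigenvalues_nonneg t
  have hcd : (d:ℝ) ≤ ∑ i, (c i)^2 := by
    rw [← hEtr]
    exact Finset.sum_le_sum fun i _ => hcEi i
  set M : Matrix (Fin d) (Fin d) ℂ := ∑ i, (c i : ℂ) • A i with hM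
  have hMH : M.IsHermitian := by
    show Mᴴ = M
    rw [hM, Matrix.conjTranspose_sum]
    refine Finset.sum_congr rfl fun i _ => ?_
    rw [Matrix.conjTranspose_smul, (hAps i).1.eq]
    simp
  have htrM : (M.trace).re = ∑ i, (c i)^2 := by
    rw [hM, Matrix.trace_sum, Complex.re_sum]
    refine Finset.sum_congr rfl fun i _ => ?_
    rw [Matrix.trace_smul]
    simp only [smul_eq_mul, Complex.re_ofReal_mul]
    ring
  have hquad : c ⬝ᵥ (S *ᵥ c) = ((M * M).trace).re := by
    have hMM : M * M = ∑ i, ∑ j, (((c i : ℂ)) * (c j : ℂ)) • (A i * A j) := by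
      rw [hM, Finset.sum_mul_sum]
      refine Finset.sum_congr rfl fun i _ => Finset.sum_congr rfl fun j _ => ?_
      rw [smul_mul_assoc, mul_smul_comm, smul_smul]
    rw [hMM]
    simp only [Matrix.trace_sum, Complex.re_sum, Matrix.trace_smul, smul_eq_mul]
    simp only [dotProduct, Matrix.mulVec, dotProduct]
    refine Finset.sum_congr rfl fun i _ => ?_
    rw [Finset.mul_sum]
    refine Finset.sum_congr rfl fun j _ => ?_
    rw [hS' i j]
    have : ((c i : ℂ) * (c j : ℂ) * ((A i * A j)).trace).re
        = c i * c j * ((A i * A j)).trace.re := by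
      rw [mul_assoc, Complex.re_ofReal_mul, Complex.re_ofReal_mul, mul_assoc]
    rw [this]
    ring
  obtain ⟨i₀, -, hmax⟩ := Finset.exists_max_image Finset.univ hS.eigenvalues
    ⟨(⟨0, by omega⟩ : Fin n), Finset.mem_univ _⟩
  have hmax' : ∀ i, hS.eigenvalues i ≤ hS.eigenvalues i₀ := fun i => hmax i (Finset.mem_univ i)
  set mx := hS.eigenvalues i₀ with hmx
  have hray : c ⬝ᵥ (S *ᵥ c) ≤ mx * (c ⬝ᵥ c) := my_quad_form_le hS c hmax'
  have hcc : c ⬝ᵥ c = ∑ i, (c i)^2 := by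
    simp [dotProduct, pow_two]
  have hMtr2 : ((M*M).trace).re = ∑ t, (hMH.eigenvalues t)^2 := by
    rw [← RCLike.re_to_complex]
    exact my_re_trace_sq_eq hMH
  have hMtr1 : (M.trace).re = ∑ t, hMH.eigenvalues t := by
    rw [← RCLike.re_to_complex]
    exact my_re_trace_eq hMH
  have hCS : (∑ i, (c i)^2)^2 ≤ (d:ℝ) * ((M*M).trace).re := by
    rw [← htrM, hMtr1, hMtr2]
    have := sq_sum_le_card_mul_sum_sq (s := (Finset.univ : Finset (Fin d)))
      (f := hMH.eigenvalues)
    simpa using this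
  have hdpos : (0:ℝ) < (d:ℝ) := by
    have : (1:ℝ) ≤ (d:ℝ) := by exact_mod_cast hd1
    linarith
  have hm1 : 1 ≤ mx := by
    set t := ∑ i, (c i)^2 with ht
    have htd : (d:ℝ) ≤ t := hcd
    have htpos : 0 < t := lt_of_lt_of_le hdpos htd
    have hQ : t^2 ≤ (d:ℝ) * (mx * t) := by
      calc t^2 ≤ (d:ℝ) * ((M*M).trace).re := hCS
        _ = (d:ℝ) * (c ⬝ᵥ (S *ᵥ c)) := by rw [hquad]
        _ ≤ (d:ℝ) * (mx * t) := by
            have := hray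
            rw [hcc] at this
            exact mul_le_mul_of_nonneg_left this (le_of_lt hdpos)
    have h2 : t ≤ (d:ℝ) * mx := by nlinarith
    nlinarith
  intro k hk1 hkn
  obtain ⟨T, hTcard, hTi₀, hTex⟩ := my_exists_good_subset hS.eigenvalues i₀ k hk1 hkn
  refine ⟨T, hTcard, ?_⟩
  have havg := my_card_mul_sum_le hS.eigenvalues (T.erase i₀) Tᶜ hTex
  have hcarde : ((T.erase i₀).card : ℝ) = (k:ℝ) - 1 := by
    rw [Finset.card_erase_of_mem hTi₀, hTcard]
    have : (1:ℕ) ≤ k := hk1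
    push_cast [Nat.cast_sub this]
    ring
  have hcardc : ((Tᶜ).card : ℝ) = (n:ℝ) - (k:ℝ) := by
    rw [Finset.card_compl, hTcard]
    have : k ≤ Fintype.card (Fin n) := by simpa using hkn
    push_cast [Nat.cast_sub this]
    simp
  set x := ∑ i ∈ T, hS.eigenvalues i with hx
  have hsumE : ∑ i ∈ T.erase i₀, hS.eigenvalues i = x - mx := by
    rw [hx, Finset.sum_erase_eq_sub hTi₀, hmx]
  have hsumC : ∑ j ∈ Tᶜ, hS.eigenvalues j = (d:ℝ) - x := by
    have := Finset.sum_compl_add_sum T hS.eigenvalues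
    rw [part1] at this
    linarith [this]
  rw [hcarde, hcardc, hsumE, hsumC] at havg
  have hn1 : (0:ℝ) < (n:ℝ) - 1 := by
    have : (2:ℝ) ≤ (n:ℝ) := by exact_mod_cast hn
    linarith
  have hkn' : (k:ℝ) ≤ (n:ℝ) := by exact_mod_cast hkn
  have hk1' : (1:ℝ) ≤ (k:ℝ) := by exact_mod_cast hk1
  have hstep : ((n:ℝ)-1) + ((k:ℝ)-1)*((d:ℝ)-1) ≤ x * ((n:ℝ)-1) := by
    have hkey : x*((n:ℝ)-1) - (((n:ℝ)-1) + ((k:ℝ)-1)*((d:ℝ)-1))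
        = ((((n:ℝ)-(k:ℝ))*(x-mx) - ((k:ℝ)-1)*((d:ℝ)-x)) + ((n:ℝ)-(k:ℝ))*(mx-1)) := by
      ring
    have hpos : 0 ≤ ((n:ℝ)-(k:ℝ))*(mx-1) :=
      mul_nonneg (sub_nonneg.mpr hkn') (sub_nonneg.mpr hm1)
    linarith [havg, hpos, hkey.le, hkey.ge]
  have hfin : ((k:ℝ)-1)*((d:ℝ)-1)/((n:ℝ)-1) ≤ x - 1 := by
    rw [div_le_iff₀ hn1]
    have hexp : (x-1)*((n:ℝ)-1) = x*((n:ℝ)-1) - ((n:ℝ)-1) := by ring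
    rw [hexp]
    linarith [hstep]
  linarith
end

section
/- Let {E_i}_{i=1}^n be a POVM on ℂ^d with d ≤ n, n ≥ 2, and every effect E_i nonzero, and let S be the n×n Gram matrix with entries S_{ij} = tr(√E_i √E_j). Then for every real number γ, Σ_{i,j=1}^n (S_{ij} − γ·δ_{ij})² ≥ (1 − γ)² + (n−1)·((d−1)/(n−1) − γ)², where δ_{ij} is the Kronecker delta. The right-hand side equals the squared Frobenius norm ‖S_EA − γ·1‖_F² for the Gram matrix S_EA of an equiangular POVM with n effects. -/
open Matrix BigOperators
open scoped ComplexOrder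

lemma Matrix.PosSemidef.posSemidef_sqrt {d : ℕ} {A : Matrix (Fin d) (Fin d) ℂ}
    (hA : A.PosSemidef) : hA.sqrt.PosSemidef := by
  unfold Matrix.PosSemidef.sqrt
  have hD : (diagonal (((↑) ∘ (√·) ∘ hA.1.eigenvalues) : Fin d → ℂ)).PosSemidef := by
    rw [posSemidef_diagonal_iff]
    intro i
    simp only [Function.comp_apply]
    exact_mod_cast Real.sqrt_nonneg _
  have := hD.mul_mul_conjTranspose_same (hA.1.eigenvectorUnitary : Matrix (Fin d) (Fin d) ℂ)
  rwa [← Matrix.star_eq_conjTranspose] at this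

lemma Matrix.PosSemidef.sqrt_mul_self {d : ℕ} {A : Matrix (Fin d) (Fin d) ℂ}
    (hA : A.PosSemidef) : hA.sqrt * hA.sqrt = A := by
  unfold Matrix.PosSemidef.sqrt
  set U : Matrix (Fin d) (Fin d) ℂ := (hA.1.eigenvectorUnitary : Matrix (Fin d) (Fin d) ℂ)
  have hU : star U * U = 1 := Unitary.coe_star_mul_self _
  have hDD : diagonal (((↑) ∘ (√·) ∘ hA.1.eigenvalues) : Fin d → ℂ) *
      diagonal (((↑) ∘ (√·) ∘ hA.1.eigenvalues) : Fin d → ℂ) =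
      diagonal (RCLike.ofReal ∘ hA.1.eigenvalues) := by
    rw [diagonal_mul_diagonal]
    congr 1; funext i
    simp only [Function.comp_apply]
    rw [← Complex.ofReal_mul, Real.mul_self_sqrt (hA.eigenvalues_nonneg i)]
    rfl
  calc U * diagonal (((↑) ∘ (√·) ∘ hA.1.eigenvalues) : Fin d → ℂ) * star U *
        (U * diagonal (((↑) ∘ (√·) ∘ hA.1.eigenvalues) : Fin d → ℂ) * star U)
      = U * (diagonal (((↑) ∘ (√·) ∘ hA.1.eigenvalues) : Fin d → ℂ) * (star U * U) *
          diagonal (((↑) ∘ (√·) ∘ hA.1.eigenvalues) : Fin d → ℂ)) * star U := by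
        simp only [Matrix.mul_assoc]
    _ = U * diagonal (RCLike.ofReal ∘ hA.1.eigenvalues) * star U := by
        rw [hU, Matrix.mul_one, hDD]
    _ = A := by
        conv_rhs => rw [hA.1.spectral_theorem]
        rfl

lemma aux_dot {d : ℕ} (B : Matrix (Fin d) (Fin d) ℂ) (a b : ℂ) (k l : Fin d) :
    star (Pi.single k a) ⬝ᵥ (B *ᵥ Pi.single l b) = (starRingEnd ℂ) a * (B k l * b) := by
  simp [mulVec_single, dotProduct, Pi.single_apply, apply_ite, Finset.sum_ite_eq]

lemma psd_diag_nonneg {d : ℕ} {B : Matrix (Fin d) (Fin d) ℂ} (hB : B.PosSemidef)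
    (k : Fin d) : 0 ≤ (B k k).re := by
  have := hB.dotProduct_mulVec_nonneg (Pi.single k 1)
  simp [dotProduct, mulVec, Pi.single_apply, apply_ite, Finset.sum_ite_eq] at this
  simpa using (Complex.le_def.mp this).1

lemma psd_normSq_le {d : ℕ} {B : Matrix (Fin d) (Fin d) ℂ} (hB : B.PosSemidef)
    (k l : Fin d) : Complex.normSq (B k l) ≤ (B k k).re * (B l l).re := by
  have hdk := psd_diag_nonneg hB k
  have hdl := psd_diag_nonneg hB l
  have hherm : B l k = (starRingEnd ℂ) (B k l) := by rw [← hB.1.apply l k]; rfl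
  set a := (B k k).re
  set b := (B l l).re
  set q := Complex.normSq (B k l) with hq
  have hqnn : 0 ≤ q := Complex.normSq_nonneg _
  have key : ∀ t : ℝ, 0 ≤ a - 2*t*q + t^2*(q*b) := by
    intro t
    set z : ℂ := -(t:ℂ) * (starRingEnd ℂ) (B k l) with hz
    have h0 := hB.dotProduct_mulVec_nonneg (Pi.single k 1 + Pi.single l z)
    have hval : star (Pi.single k 1 + Pi.single l z) ⬝ᵥ
        (B *ᵥ (Pi.single k 1 + Pi.single l z)) =
        B k k + B k l * z + (starRingEnd ℂ) z * B l k
          + (starRingEnd ℂ) z * (B l l * z) := by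
      rw [star_add, mulVec_add, dotProduct_add, add_dotProduct, add_dotProduct,
        aux_dot, aux_dot, aux_dot, aux_dot]
      simp only [_root_.map_one, one_mul]
      ring
    rw [hval] at h0
    have h1 := (Complex.le_def.mp h0).1
    rw [hherm, hz] at h1
    simp only [Complex.add_re, Complex.mul_re, Complex.mul_im, Complex.neg_re,
      Complex.neg_im, Complex.ofReal_re, Complex.ofReal_im, Complex.conj_re,
      Complex.conj_im, Complex.zero_re, _root_.map_mul, map_neg,
      Complex.conj_conj, Complex.conj_ofReal, neg_mul, neg_neg] at h1
    rw [hq, Complex.normSq_apply]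
    nlinarith [h1]
  rcases eq_or_lt_of_le hqnn with hq0 | hqpos
  · nlinarith
  · rcases eq_or_lt_of_le hdl with hb0 | hbpos
    · have h1 := key ((a+1)/(2*q))
      rw [← hb0] at h1
      have h2 : 2*((a+1)/(2*q))*q = a+1 := by field_simp
      nlinarith [h1, h2]
    · have h1 := key (1/b)
      have h3 : a - 2*(1/b)*q + (1/b)^2*(q*b) = a - q/b := by field_simp; ring
      rw [h3] at h1
      have h2 : (a - q/b)*b = a*b - q := by field_simp
      nlinarith [mul_nonneg h1 hbpos.le, h2]

lemma herm_trace_sq {d : ℕ} {M : Matrix (Fin d) (Fin d) ℂ} (hM : M.IsHermitian) :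
    (M * M).trace.re = ∑ k, ∑ l, Complex.normSq (M k l) := by
  have h : ∀ k l : Fin d, M k l * M l k = (Complex.normSq (M k l) : ℂ) := by
    intro k l
    rw [← hM.apply l k, Complex.star_def, Complex.mul_conj]
  rw [Matrix.trace]
  simp only [Matrix.diag_apply, Matrix.mul_apply, h]
  rw [Complex.re_sum]
  congr 1; funext k
  rw [Complex.re_sum]
  simp

lemma trace_re_eq_sum_diag {d : ℕ} (B : Matrix (Fin d) (Fin d) ℂ) :
    B.trace.re = ∑ k, (B k k).re := by
  rw [Matrix.trace, Complex.re_sum]; rfl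

/-- `(tr B)² ≥ tr (B·B)` for PSD `B`. -/
lemma psd_trace_sq_le {d : ℕ} {B : Matrix (Fin d) (Fin d) ℂ} (hB : B.PosSemidef) :
    ((B * B).trace).re ≤ (B.trace.re) ^ 2 := by
  rw [herm_trace_sq hB.1, trace_re_eq_sum_diag, sq, Finset.sum_mul_sum]
  exact Finset.sum_le_sum fun k _ => Finset.sum_le_sum fun l _ => psd_normSq_le hB k l

/-- Cauchy–Schwarz against the identity, for Hermitian `M`. -/
lemma herm_cs {d : ℕ} {M : Matrix (Fin d) (Fin d) ℂ} (hM : M.IsHermitian) :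
    (M.trace.re)^2 ≤ (d:ℝ) * ((M * M).trace).re := by
  rw [herm_trace_sq hM, trace_re_eq_sum_diag]
  have h2 : (∑ k, (M k k).re)^2 ≤ (d:ℝ) * ∑ k, ((M k k).re)^2 := by
    have := sq_sum_le_card_mul_sum_sq (s := (Finset.univ : Finset (Fin d)))
      (f := fun k => (M k k).re)
    simpa using this
  refine h2.trans ?_
  have h3 : ∀ k : Fin d, ((M k k).re)^2 ≤ ∑ l, Complex.normSq (M k l) := by
    intro k
    have h4 : ((M k k).re)^2 ≤ Complex.normSq (M k k) := by
      rw [Complex.normSq_apply]; nlinarith [sq_nonneg (M k k).im]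
    exact h4.trans (Finset.single_le_sum (f := fun l => Complex.normSq (M k l))
      (fun l _ => Complex.normSq_nonneg _) (Finset.mem_univ k))
  have h5 := Finset.sum_le_sum (fun k (_ : k ∈ Finset.univ) => h3 k)
  have hd : (0:ℝ) ≤ (d:ℝ) := Nat.cast_nonneg d
  nlinarith [h5]

lemma sum_moment1 {n : ℕ} (s : Fin n → Fin n → ℝ) (w : Fin n → ℝ) (c1 c2 : ℝ) :
    ∑ i, ∑ j, s i j * (c1 * (w i * w j) + c2 * (if i = j then 1 else 0))
      = c1 * (∑ i, ∑ j, w i * w j * s i j) + c2 * ∑ i, s i i := by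
  have hrow : ∀ i, ∑ j, s i j * (c1 * (w i * w j) + c2 * (if i = j then 1 else 0))
      = c1 * (∑ j, w i * w j * s i j) + c2 * s i i := by
    intro i
    have h : ∀ j, s i j * (c1 * (w i * w j) + c2 * (if i = j then 1 else 0))
        = c1 * (w i * w j * s i j) + (if i = j then c2 * s i j else 0) := by
      intro j; by_cases h : i = j <;> simp [h] <;> ring
    rw [Finset.sum_congr rfl fun j _ => h j, Finset.sum_add_distrib, ← Finset.mul_sum,
      Finset.sum_ite_eq]
    simp
  rw [Finset.sum_congr rfl fun i _ => hrow i, Finset.sum_add_distrib, ← Finset.mul_sum,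
    ← Finset.mul_sum]

lemma sum_moment2 {n : ℕ} (w : Fin n → ℝ) (c1 c2 : ℝ) :
    ∑ i, ∑ j, (c1 * (w i * w j) + c2 * (if i = j then 1 else 0))^2
      = c1^2 * (∑ i, w i^2)^2 + 2*c1*c2*(∑ i, w i^2) + c2^2 * n := by
  have hrow : ∀ i, ∑ j, (c1 * (w i * w j) + c2 * (if i = j then 1 else 0))^2
      = (c1^2 * w i^2) * (∑ j, w j^2) + (2*c1*c2 * w i^2 + c2^2) := by
    intro i
    have h : ∀ j, (c1 * (w i * w j) + c2 * (if i = j then 1 else 0))^2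
        = (c1^2 * w i^2) * w j^2 + (if i = j then 2*c1*c2*w i^2 + c2^2 else 0) := by
      intro j; by_cases h : i = j <;> simp [h] <;> ring
    rw [Finset.sum_congr rfl fun j _ => h j, Finset.sum_add_distrib, ← Finset.mul_sum,
      Finset.sum_ite_eq]
    simp
  rw [Finset.sum_congr rfl fun i _ => hrow i, Finset.sum_add_distrib, Finset.sum_add_distrib,
    Finset.sum_const, Finset.card_univ, Fintype.card_fin, nsmul_eq_mul,
    ← Finset.sum_mul, ← Finset.mul_sum, ← Finset.mul_sum]
  ring

lemma sum_expand_gamma {n : ℕ} (s : Fin n → Fin n → ℝ) (γ : ℝ) :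
    ∑ i, ∑ j, (s i j - γ * (if i = j then 1 else 0))^2
      = (∑ i, ∑ j, s i j^2) - 2*γ*(∑ i, s i i) + n * γ^2 := by
  have hrow : ∀ i, ∑ j, (s i j - γ * (if i = j then 1 else 0))^2
      = (∑ j, s i j^2) + (-(2*γ) * s i i + γ^2) := by
    intro i
    have h : ∀ j, (s i j - γ * (if i = j then 1 else 0))^2
        = s i j^2 + (if i = j then -(2*γ)*s i j + γ^2 else 0) := by
      intro j; by_cases h : i = j <;> simp [h] <;> ring
    rw [Finset.sum_congr rfl fun j _ => h j, Finset.sum_add_distrib, Finset.sum_ite_eq]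
    simp
  rw [Finset.sum_congr rfl fun i _ => hrow i, Finset.sum_add_distrib, Finset.sum_add_distrib,
    ← Finset.mul_sum, Finset.sum_const, Finset.card_univ, Fintype.card_fin, nsmul_eq_mul]
  ring

set_option maxHeartbeats 1000000 in
/-- The purely real-analytic core of the argument. -/
lemma real_cs_bound {n : ℕ} (hn : 2 ≤ n) (s : Fin n → Fin n → ℝ) (w : Fin n → ℝ)
    (d : ℝ) (hd : 1 ≤ d) (hdn : d ≤ n)
    (ht : ∑ i, s i i = d)
    (hN2 : d ≤ ∑ i, w i ^ 2)
    (hcs : (∑ i, w i ^ 2)^2 ≤ d * ∑ i, ∑ j, w i * w j * s i j) :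
    1 + (d - 1)^2 / ((n:ℝ) - 1) ≤ ∑ i, ∑ j, s i j ^ 2 := by
  have hn1 : (0:ℝ) < (n:ℝ) - 1 := by
    have : (2:ℝ) ≤ (n:ℝ) := by exact_mod_cast hn
    linarith
  have hn1' : ((n:ℝ) - 1) ≠ 0 := ne_of_gt hn1
  set N2 := ∑ i, w i ^ 2 with hN2def
  set μ' := ∑ i, ∑ j, w i * w j * s i j with hμ'def
  clear_value N2 μ'
  have hN2pos : 0 < N2 := lt_of_lt_of_le (by linarith) hN2
  have hN2ne : N2 ≠ 0 := ne_of_gt hN2pos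
  have hμ'N2 : N2 ≤ μ' := by nlinarith
  set μ := μ' / N2 with hμdef
  clear_value μ
  have hμ1 : 1 ≤ μ := by rw [hμdef, le_div_iff₀ hN2pos]; linarith
  have hμ'eq : μ' = μ * N2 := by rw [hμdef]; field_simp
  set β := (d - μ)/((n:ℝ)-1) with hβ
  set a := (μ - β)/N2 with ha
  set K := μ^2 + (d-μ)^2/((n:ℝ)-1) with hK
  clear_value β a K
  have hKpos : 1 ≤ K := by
    have h0 : 0 ≤ (d-μ)^2/((n:ℝ)-1) := div_nonneg (sq_nonneg _) hn1.le
    rw [hK]; nlinarith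
  have hsX : ∑ i, ∑ j, s i j * (a * (w i * w j) + β * (if i = j then 1 else 0)) = K := by
    rw [sum_moment1, ← hμ'def, ht, hμ'eq, ha, hβ, hK]
    field_simp
    ring
  have hXX : ∑ i, ∑ j, (a * (w i * w j) + β * (if i = j then 1 else 0))^2 = K := by
    rw [sum_moment2, ← hN2def, ha, hβ, hK]
    field_simp
    ring
  have hCS : (∑ i, ∑ j, s i j * (a * (w i * w j) + β * (if i = j then 1 else 0)))^2
      ≤ (∑ i, ∑ j, s i j ^ 2)
        * (∑ i, ∑ j, (a * (w i * w j) + β * (if i = j then 1 else 0))^2) := by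
    have := Finset.sum_mul_sq_le_sq_mul_sq (Finset.univ : Finset (Fin n × Fin n))
      (fun p => s p.1 p.2)
      (fun p => a * (w p.1 * w p.2) + β * (if p.1 = p.2 then 1 else 0))
    simpa [Fintype.sum_prod_type] using this
  rw [hsX, hXX] at hCS
  have hTK : K ≤ ∑ i, ∑ j, s i j ^ 2 := by nlinarith
  refine le_trans ?_ hTK
  rw [hK, ← sub_nonneg]
  have expand : μ^2 + (d-μ)^2/((n:ℝ)-1) - (1 + (d-1)^2/((n:ℝ)-1))
      = ((((n:ℝ)-1)*μ^2 + (d-μ)^2) - (((n:ℝ)-1) + (d-1)^2))/((n:ℝ)-1) := by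
    field_simp
  rw [expand]
  apply div_nonneg _ hn1.le
  have hprod : 0 ≤ (μ - 1) * ((μ + 1)*(n:ℝ) - 2*d) := by
    apply mul_nonneg (by linarith)
    nlinarith
  nlinarith [hprod]

/-- For a POVM `{E_i}` on `ℂ^d` with `d ≤ n`, `n ≥ 2`, and all effects nonzero,
and for every real `γ`,
`Σ_{i,j} (S_{ij} − γδ_{ij})² ≥ (1 − γ)² + (n−1)((d−1)/(n−1) − γ)²`,
where `S_{ij} = tr(√E_i √E_j)`. The right-hand side is `‖S_EA − γ·1‖_F²` for an
equiangular POVM with `n` effects. -/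
theorem gram_frobenius_distance_ge_ea
    (d n : ℕ) (hdn : d ≤ n) (hn : 2 ≤ n)
    (E : Fin n → Matrix (Fin d) (Fin d) ℂ)
    (hE : ∀ i, (E i).PosSemidef)
    (hsum : ∑ i, E i = 1)
    (hne : ∀ i, E i ≠ 0)
    (γ : ℝ) :
    (1 - γ) ^ 2 + ((n : ℝ) - 1) * (((d : ℝ) - 1) / ((n : ℝ) - 1) - γ) ^ 2
      ≤ ∑ i, ∑ j, (((hE i).sqrt * (hE j).sqrt).trace.re
          - γ * (if i = j then 1 else 0)) ^ 2 := by
  have hd1 : 1 ≤ d := by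
    rcases Nat.eq_zero_or_pos d with h0 | h
    · exfalso
      apply hne ⟨0, by omega⟩
      subst h0
      ext k l
      exact k.elim0
    · exact h
  have hn1 : (0:ℝ) < (n:ℝ) - 1 := by
    have : (2:ℝ) ≤ (n:ℝ) := by exact_mod_cast hn
    linarith
  set w : Fin n → ℝ := fun i => ((hE i).sqrt.trace).re with hw
  set s : Fin n → Fin n → ℝ := fun i j => (((hE i).sqrt * (hE j).sqrt).trace).re with hs
  -- diagonal of the Gram matrix
  have hsii : ∀ i, s i i = ((E i).trace).re := by
    intro i
    rw [hs]
    simp only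
    rw [(hE i).sqrt_mul_self]
  have ht : ∑ i, s i i = (d:ℝ) := by
    rw [Finset.sum_congr rfl fun i _ => hsii i, ← Complex.re_sum, ← Matrix.trace_sum, hsum,
      Matrix.trace_one]
    simp
  -- the weight vector dominates the trace
  have hN2 : (d:ℝ) ≤ ∑ i, w i ^ 2 := by
    rw [← ht]
    refine Finset.sum_le_sum fun i _ => ?_
    rw [hsii i, ← (hE i).sqrt_mul_self]
    exact psd_trace_sq_le (hE i).posSemidef_sqrt
  -- the Cauchy–Schwarz condition via the matrix `M`
  set M : Matrix (Fin d) (Fin d) ℂ := ∑ i, ((w i : ℝ) : ℂ) • (hE i).sqrt with hM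
  have hMherm : M.IsHermitian := by
    show Mᴴ = M
    rw [hM, Matrix.conjTranspose_sum]
    refine Finset.sum_congr rfl fun i _ => ?_
    rw [Matrix.conjTranspose_smul, (hE i).posSemidef_sqrt.1]
    norm_num
  have htrM : M.trace.re = ∑ i, w i ^ 2 := by
    rw [hM, Matrix.trace_sum, Complex.re_sum]
    refine Finset.sum_congr rfl fun i _ => ?_
    rw [Matrix.trace_smul, smul_eq_mul, Complex.re_ofReal_mul, sq]
  have htrM2 : (M * M).trace.re = ∑ i, ∑ j, w i * w j * s i j := by
    rw [hM, Finset.sum_mul_sum, Matrix.trace_sum, Complex.re_sum]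
    refine Finset.sum_congr rfl fun i _ => ?_
    rw [Matrix.trace_sum, Complex.re_sum]
    refine Finset.sum_congr rfl fun j _ => ?_
    rw [smul_mul_smul_comm, Matrix.trace_smul, smul_eq_mul, ← Complex.ofReal_mul,
      Complex.re_ofReal_mul]
  have hcs : (∑ i, w i ^ 2)^2 ≤ (d:ℝ) * ∑ i, ∑ j, w i * w j * s i j := by
    rw [← htrM, ← htrM2]
    exact herm_cs hMherm
  have main := real_cs_bound hn s w (d:ℝ) (by exact_mod_cast hd1) (by exact_mod_cast hdn)
    ht hN2 hcs
  have hexp := sum_expand_gamma s γ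
  calc (1 - γ) ^ 2 + ((n : ℝ) - 1) * (((d : ℝ) - 1) / ((n : ℝ) - 1) - γ) ^ 2
      = 1 + ((d:ℝ) - 1)^2 / ((n:ℝ) - 1) - 2*γ*(d:ℝ) + (n:ℝ) * γ^2 := by
        field_simp
        ring
    _ ≤ (∑ i, ∑ j, s i j^2) - 2*γ*(d:ℝ) + (n:ℝ) * γ^2 := by linarith
    _ = ∑ i, ∑ j, (s i j - γ * (if i = j then 1 else 0))^2 := by rw [hexp, ht]
end

section
/- Let {E_i}_{i=1}^n be a POVM on ℂ^d, and let (X_a)_{a=1}^{d²} be any family of Hermitian d×d complex matrices orthonormal with respect to the Hilbert–Schmidt inner product ⟨A,B⟩ = tr(AB). Define D = Σ_{a=1}^{d²} tr( (Σ_{l=1}^n √E_l X_a √E_l − X_a)² ), R = d − (1/d) Σ_{i=1}^n (tr √E_i)², and O = Σ_{i,j=1}^n (tr(√E_i √E_j))² − 2d + n. Then D = 2d(R + 1) − d² − n + O. -/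
open Matrix BigOperators
open scoped ComplexOrder

open scoped InnerProductSpace in
/-- Completeness relation for a Hilbert–Schmidt orthonormal family of `d²` Hermitian matrices. -/
lemma hs_complete_aux (d : ℕ) (X : Fin (d ^ 2) → Matrix (Fin d) (Fin d) ℂ)
    (hXherm : ∀ a, (X a).IsHermitian)
    (hXortho : ∀ a b, (X a * X b).trace = if a = b then 1 else 0)
    (i j k l : Fin d) :
    ∑ a, X a i j * X a l k = (if i = k then (1:ℂ) else 0) * (if j = l then (1:ℂ) else 0) := by
  classical
  have hconj : ∀ a (p q : Fin d), (starRingEnd ℂ) (X a p q) = X a q p := by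
    intro a p q
    conv_rhs => rw [← hXherm a]
    rfl
  set v : Fin (d ^ 2) → EuclideanSpace ℂ (Fin d × Fin d) :=
    fun a => (WithLp.equiv 2 (Fin d × Fin d → ℂ)).symm (fun p => X a p.1 p.2) with hv_def
  have hv : Orthonormal ℂ v := by
    rw [orthonormal_iff_ite]
    intro a b
    have h := hXortho a b
    simp only [Matrix.trace, Matrix.diag_apply, Matrix.mul_apply] at h
    simp only [hv_def, PiLp.inner_apply, RCLike.inner_apply, WithLp.equiv_symm_apply, WithLp.ofLp_toLp, hconj]
    rw [← h, Fintype.sum_prod_type, Finset.sum_comm]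
    exact Finset.sum_congr rfl fun _ _ => Finset.sum_congr rfl fun _ _ => mul_comm _ _
  have hcard : Fintype.card (Fin (d ^ 2))
      = Module.finrank ℂ (EuclideanSpace ℂ (Fin d × Fin d)) := by
    simp [finrank_euclideanSpace, sq]
  let b : OrthonormalBasis (Fin (d ^ 2)) ℂ (EuclideanSpace ℂ (Fin d × Fin d)) :=
    OrthonormalBasis.mk hv
      (le_of_eq (hv.linearIndependent.span_eq_top_of_card_eq_finrank' hcard).symm)
  have hp := b.sum_inner_mul_inner (EuclideanSpace.single (i, j) (1:ℂ))
      (EuclideanSpace.single (k, l) (1:ℂ))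
  simp only [b, OrthonormalBasis.coe_mk, EuclideanSpace.inner_single_left,
    EuclideanSpace.inner_single_right, _root_.map_one, _root_.map_zero, one_mul, mul_one,
    apply_ite (starRingEnd ℂ), EuclideanSpace.single_apply, hv_def,
    WithLp.equiv_symm_apply, WithLp.ofLp_toLp, hconj] at hp
  rw [hp]
  by_cases h1 : i = k <;> by_cases h2 : j = l <;>
    simp [h1, h2, Prod.ext_iff, eq_comm]

/-- Swap identity: `∑_a tr(A X_a B X_a) = tr A · tr B`. -/
lemma hs_key_aux (d : ℕ) (X : Fin (d ^ 2) → Matrix (Fin d) (Fin d) ℂ)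
    (hXherm : ∀ a, (X a).IsHermitian)
    (hXortho : ∀ a b, (X a * X b).trace = if a = b then 1 else 0)
    (A B : Matrix (Fin d) (Fin d) ℂ) :
    ∑ a, (A * X a * B * X a).trace = A.trace * B.trace := by
  classical
  have hexp : ∀ a, (A * X a * B * X a).trace
      = ∑ i, ∑ l, ∑ k, ∑ j, A i j * X a j k * B k l * X a l i := by
    intro a
    simp only [Matrix.trace, Matrix.diag_apply, Matrix.mul_apply, Finset.sum_mul]
  calc ∑ a, (A * X a * B * X a).trace
      = ∑ a, ∑ i, ∑ l, ∑ k, ∑ j, A i j * X a j k * B k l * X a l i :=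
        Finset.sum_congr rfl fun a _ => hexp a
    _ = ∑ i, ∑ a, ∑ l, ∑ k, ∑ j, A i j * X a j k * B k l * X a l i := Finset.sum_comm
    _ = ∑ i, ∑ l, ∑ a, ∑ k, ∑ j, A i j * X a j k * B k l * X a l i :=
        Finset.sum_congr rfl fun i _ => Finset.sum_comm
    _ = ∑ i, ∑ l, ∑ k, ∑ a, ∑ j, A i j * X a j k * B k l * X a l i :=
        Finset.sum_congr rfl fun i _ => Finset.sum_congr rfl fun l _ => Finset.sum_comm
    _ = ∑ i, ∑ l, ∑ k, ∑ j, ∑ a, A i j * X a j k * B k l * X a l i :=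
        Finset.sum_congr rfl fun i _ => Finset.sum_congr rfl fun l _ =>
          Finset.sum_congr rfl fun k _ => Finset.sum_comm
    _ = ∑ i, ∑ l, ∑ k, ∑ j, A i j * B k l *
          ((if j = i then (1:ℂ) else 0) * (if k = l then (1:ℂ) else 0)) := by
        refine Finset.sum_congr rfl fun i _ => Finset.sum_congr rfl fun l _ =>
          Finset.sum_congr rfl fun k _ => Finset.sum_congr rfl fun j _ => ?_
        rw [← hs_complete_aux d X hXherm hXortho j k i l, Finset.mul_sum]
        exact Finset.sum_congr rfl fun a _ => by ring
    _ = A.trace * B.trace := by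
        simp only [mul_ite, mul_one, mul_zero, ite_mul, zero_mul, Finset.sum_ite_irrel,
          Finset.sum_ite_eq, Finset.sum_ite_eq', Finset.mem_univ, if_true]
        rw [Matrix.trace, Matrix.trace, Finset.sum_mul_sum]
        simp [Matrix.diag]

/-- For a POVM `{E_i}` on `ℂ^d` and any Hilbert–Schmidt orthonormal family
`(X_a)_{a=1}^{d²}` of Hermitian matrices, the disturbance
`D = Σ_a tr((Σ_l √E_l X_a √E_l − X_a)²)`, measurement strength
`R = d − (1/d) Σ_i (tr √E_i)²`, and orthogonality
`O = Σ_{i,j} (tr(√E_i √E_j))² − 2d + n` satisfy `D = 2d(R + 1) − d² − n + O`. -/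
theorem disturbance_decomposition
    (d n : ℕ) (E : Fin n → Matrix (Fin d) (Fin d) ℂ)
    (hE : ∀ i, (E i).PosSemidef)
    (hsum : ∑ i, E i = 1)
    (X : Fin (d ^ 2) → Matrix (Fin d) (Fin d) ℂ)
    (hXherm : ∀ a, (X a).IsHermitian)
    (hXortho : ∀ a b, (X a * X b).trace = if a = b then 1 else 0)
    (R O : ℝ)
    (hR : R = (d : ℝ) - (1 / (d : ℝ)) * ∑ i, (((hE i).sqrt).trace.re) ^ 2)
    (hO : O = ∑ i, ∑ j, (((hE i).sqrt * (hE j).sqrt).trace.re) ^ 2 - 2 * (d : ℝ) + (n : ℝ)) :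
    ∑ a, ((∑ l, (hE l).sqrt * X a * (hE l).sqrt - X a) ^ 2).trace
      = ((2 * (d : ℝ) * (R + 1) - (d : ℝ) ^ 2 - (n : ℝ) + O : ℝ) : ℂ) := by
  classical
  rcases Nat.eq_zero_or_pos d with rfl | hd
  · -- degenerate case d = 0
    simp only [Matrix.trace, Finset.univ_eq_empty, Finset.sum_empty, Complex.zero_re,
      ne_eq, OfNat.ofNat_ne_zero, not_false_eq_true, zero_pow, mul_zero, sub_zero] at hR hO ⊢
    rw [Finset.sum_eq_zero (fun a _ => rfl)]
    rw [hR, hO]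
    push_cast
    ring_nf
    simp
  have hd0 : (d:ℝ) ≠ 0 := Nat.cast_ne_zero.mpr hd.ne'
  have key := hs_key_aux d X hXherm hXortho
  have hherm : ∀ l, ((hE l).sqrt).IsHermitian := fun l => by
    unfold Matrix.PosSemidef.sqrt
    rw [Matrix.star_eq_conjTranspose]
    exact Matrix.isHermitian_mul_mul_conjTranspose _
      (Matrix.isHermitian_diagonal_of_self_adjoint _ (by ext i; simp [Complex.conj_ofReal]))
  -- traces of square roots are real
  have ht : ∀ l : Fin n, ((hE l).sqrt).trace = (((hE l).sqrt.trace.re : ℝ) : ℂ) := by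
    intro l
    have h1 := Matrix.trace_conjTranspose ((hE l).sqrt)
    rw [hherm l] at h1
    have h2 := congrArg Complex.im h1
    simp only [Complex.star_def, Complex.conj_im] at h2
    have him : ((hE l).sqrt).trace.im = 0 := by linarith
    exact Complex.ext (by simp) (by simp [him])
  have ht2 : ∀ l m : Fin n, (((hE l).sqrt) * ((hE m).sqrt)).trace
      = ((((hE l).sqrt * (hE m).sqrt).trace.re : ℝ) : ℂ) := by
    intro l m
    have hct : ((((hE l).sqrt) * ((hE m).sqrt))ᴴ).trace
        = (((hE l).sqrt) * ((hE m).sqrt)).trace := by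
      rw [Matrix.conjTranspose_mul, hherm l, hherm m, Matrix.trace_mul_comm]
    rw [Matrix.trace_conjTranspose] at hct
    have h2 := congrArg Complex.im hct
    simp only [Complex.star_def, Complex.conj_im] at h2
    have him : (((hE l).sqrt) * ((hE m).sqrt)).trace.im = 0 := by linarith
    exact Complex.ext (by simp) (by simp [him])
  -- pointwise expansion of the square
  have hsq : ∀ a, ((∑ l, (hE l).sqrt * X a * (hE l).sqrt - X a) ^ 2).trace
      = (∑ l, ∑ m, (((hE m).sqrt * (hE l).sqrt) * X a * ((hE l).sqrt * (hE m).sqrt) * X a).trace)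
        - 2 * (∑ l, ((hE l).sqrt * X a * (hE l).sqrt * X a).trace)
        + (X a * X a).trace := by
    intro a
    have hPP : ((∑ l, (hE l).sqrt * X a * (hE l).sqrt) *
          (∑ m, (hE m).sqrt * X a * (hE m).sqrt)).trace
        = ∑ l, ∑ m, (((hE m).sqrt * (hE l).sqrt) * X a *
            ((hE l).sqrt * (hE m).sqrt) * X a).trace := by
      rw [Finset.sum_mul_sum, Matrix.trace_sum]
      refine Finset.sum_congr rfl fun l _ => ?_
      rw [Matrix.trace_sum]
      refine Finset.sum_congr rfl fun m _ => ?_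
      rw [show ((hE l).sqrt * X a * (hE l).sqrt) * ((hE m).sqrt * X a * (hE m).sqrt)
          = ((hE l).sqrt * X a * (hE l).sqrt * (hE m).sqrt * X a) * (hE m).sqrt from by
        simp only [Matrix.mul_assoc], Matrix.trace_mul_comm]
      simp only [Matrix.mul_assoc]
    have hPQ : ((∑ l, (hE l).sqrt * X a * (hE l).sqrt) * X a).trace
        = ∑ l, ((hE l).sqrt * X a * (hE l).sqrt * X a).trace := by
      rw [Finset.sum_mul, Matrix.trace_sum]
    rw [sq, sub_mul, mul_sub, mul_sub, Matrix.trace_sub, Matrix.trace_sub, Matrix.trace_sub,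
      Matrix.trace_mul_comm (X a), hPP, hPQ]
    ring
  have hsum1 : ∑ a, ∑ l, ∑ m, (((hE m).sqrt * (hE l).sqrt) * X a *
        ((hE l).sqrt * (hE m).sqrt) * X a).trace
      = ∑ l, ∑ m, ((((hE l).sqrt * (hE m).sqrt).trace.re : ℂ)) ^ 2 := by
    rw [Finset.sum_comm]
    refine Finset.sum_congr rfl fun l _ => ?_
    rw [Finset.sum_comm]
    refine Finset.sum_congr rfl fun m _ => ?_
    rw [key ((hE m).sqrt * (hE l).sqrt) ((hE l).sqrt * (hE m).sqrt),
      Matrix.trace_mul_comm ((hE m).sqrt) ((hE l).sqrt), sq, ← ht2 l m]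
  have hsum2 : ∑ a, ∑ l, ((hE l).sqrt * X a * (hE l).sqrt * X a).trace
      = ∑ l, (((hE l).sqrt.trace.re : ℂ)) ^ 2 := by
    rw [Finset.sum_comm]
    refine Finset.sum_congr rfl fun l _ => ?_
    rw [key ((hE l).sqrt) ((hE l).sqrt), sq, ← ht l]
  have hsum3 : ∑ a : Fin (d ^ 2), (X a * X a).trace = ((d:ℂ)) ^ 2 := by
    simp only [hXortho, if_true, Finset.sum_const, Finset.card_univ, Fintype.card_fin,
      nsmul_eq_mul, mul_one]
    push_cast
    ring
  have hfinal : ((2 * (d : ℝ) * (R + 1) - (d : ℝ) ^ 2 - (n : ℝ) + O : ℝ) : ℂ)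
      = ∑ l, ∑ m, ((((hE l).sqrt * (hE m).sqrt).trace.re : ℂ)) ^ 2
        - 2 * ∑ l, (((hE l).sqrt.trace.re : ℂ)) ^ 2 + ((d:ℂ)) ^ 2 := by
    have hreal : (2 * (d : ℝ) * (R + 1) - (d : ℝ) ^ 2 - (n : ℝ) + O)
        = ∑ l, ∑ m, (((hE l).sqrt * (hE m).sqrt).trace.re) ^ 2
          - 2 * ∑ l, ((hE l).sqrt.trace.re) ^ 2 + (d:ℝ) ^ 2 := by
      rw [hR, hO]
      field_simp
      ring
    rw [hreal]
    push_cast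
    ring
  calc ∑ a, ((∑ l, (hE l).sqrt * X a * (hE l).sqrt - X a) ^ 2).trace
      = ∑ a, ((∑ l, ∑ m, (((hE m).sqrt * (hE l).sqrt) * X a *
            ((hE l).sqrt * (hE m).sqrt) * X a).trace)
          - 2 * (∑ l, ((hE l).sqrt * X a * (hE l).sqrt * X a).trace)
          + (X a * X a).trace) := Finset.sum_congr rfl fun a _ => hsq a
    _ = (∑ a, ∑ l, ∑ m, (((hE m).sqrt * (hE l).sqrt) * X a *
            ((hE l).sqrt * (hE m).sqrt) * X a).trace)
          - 2 * (∑ a, ∑ l, ((hE l).sqrt * X a * (hE l).sqrt * X a).trace)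
          + ∑ a, (X a * X a).trace := by
        rw [Finset.sum_add_distrib, Finset.sum_sub_distrib, ← Finset.mul_sum]
    _ = ∑ l, ∑ m, ((((hE l).sqrt * (hE m).sqrt).trace.re : ℂ)) ^ 2
          - 2 * ∑ l, (((hE l).sqrt.trace.re : ℂ)) ^ 2 + ((d:ℂ)) ^ 2 := by
        rw [hsum1, hsum2, hsum3]
    _ = ((2 * (d : ℝ) * (R + 1) - (d : ℝ) ^ 2 - (n : ℝ) + O : ℝ) : ℂ) := hfinal.symm
end
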